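/- Let w, v be strings where w = 6^T ++ 5^T and v = 6^{θ1} ++ 5^{θ2} with 0 ≤ θ1, θ2 < T. Then δ(w, v) = (T − θ1) + (T − θ2), i.e., the edit distance between the two separator-like strings equals the total deficiency in symbol counts. -/

import Mathlib

namespace Levenshtein

/-- A cost function for edit operations (as in the former Mathlib `Levenshtein.Cost`). -/
structure Cost (α β δ : Type) where
  delete : α → δ
  insert : β → δ
  substitute : α → β → δ

/-- The default unit cost (as in the former Mathlib `Levenshtein.defaultCost`). -/
def defaultCost {α : Type} [DecidableEq α] : Cost α α ℕ where
  delete _ := 1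
  insert _ := 1
  substitute a b := if a = b then 0 else 1

end Levenshtein

/-- The former Mathlib `levenshtein`, given by its defining recursion equations. -/
def levenshtein {α β δ : Type} [AddZeroClass δ] [Min δ] (C : Levenshtein.Cost α β δ) :
    List α → List β → δ
  | [], [] => 0
  | [], y :: ys => C.insert y + levenshtein C [] ys
  | x :: xs, [] => C.delete x + levenshtein C xs []
  | x :: xs, y :: ys =>
    min (C.delete x + levenshtein C xs (y :: ys))
      (min (C.insert y + levenshtein C (x :: xs) ys) (C.substitute x y + levenshtein C xs ys))

/-- Unit-cost edit distance between two lists over a decidable-eq alphabet. -/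
def editDist (a b : List ℕ) : ℕ :=
  levenshtein Levenshtein.defaultCost a b

@[simp] lemma Levenshtein.defaultCost_delete (a : ℕ) :
    (Levenshtein.defaultCost : Levenshtein.Cost ℕ ℕ ℕ).delete a = 1 := rfl

@[simp] lemma Levenshtein.defaultCost_insert (a : ℕ) :
    (Levenshtein.defaultCost : Levenshtein.Cost ℕ ℕ ℕ).insert a = 1 := rfl

@[simp] lemma Levenshtein.defaultCost_substitute (a b : ℕ) :
    (Levenshtein.defaultCost : Levenshtein.Cost ℕ ℕ ℕ).substitute a b = if a = b then 0 else 1 := rfl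

@[simp] lemma levenshtein_nil_nil {α β δ : Type} [AddZeroClass δ] [Min δ]
    (C : Levenshtein.Cost α β δ) : levenshtein C [] [] = 0 := by
  rw [levenshtein]

@[simp] lemma levenshtein_nil_cons {α β δ : Type} [AddZeroClass δ] [Min δ]
    (C : Levenshtein.Cost α β δ) (y : β) (ys : List β) :
    levenshtein C [] (y :: ys) = C.insert y + levenshtein C [] ys := by
  rw [levenshtein]

@[simp] lemma levenshtein_cons_nil {α β δ : Type} [AddZeroClass δ] [Min δ]
    (C : Levenshtein.Cost α β δ) (x : α) (xs : List α) :
    levenshtein C (x :: xs) [] = C.delete x + levenshtein C xs [] := by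
  rw [levenshtein]

lemma levenshtein_cons_cons {α β δ : Type} [AddZeroClass δ] [Min δ]
    (C : Levenshtein.Cost α β δ) (x : α) (xs : List α) (y : β) (ys : List β) :
    levenshtein C (x :: xs) (y :: ys) =
      min (C.delete x + levenshtein C xs (y :: ys))
        (min (C.insert y + levenshtein C (x :: xs) ys) (C.substitute x y + levenshtein C xs ys)) := by
  rw [levenshtein]

lemma lev_nil_right (xs : List ℕ) :
    levenshtein Levenshtein.defaultCost xs [] = xs.length := by
  induction xs with
  | nil => simp
  | cons x xs ih => simpa [ih] using Nat.one_add _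

lemma lev_len_le_aux (n : ℕ) : ∀ xs ys : List ℕ, xs.length + ys.length ≤ n →
    xs.length ≤ levenshtein Levenshtein.defaultCost xs ys + ys.length := by
  induction n with
  | zero =>
    intro xs ys h
    have : xs = [] := by cases xs <;> simp_all
    simp [this]
  | succ n ih =>
    intro xs ys h
    cases xs with
    | nil => simp
    | cons x xs =>
      cases ys with
      | nil => simp [lev_nil_right]
      | cons y ys =>
        rw [levenshtein_cons_cons]
        have h1 := ih xs (y :: ys) (by simp at h ⊢; omega)
        have h2 := ih (x :: xs) ys (by simp at h ⊢; omega)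
        have h3 := ih xs ys (by simp at h ⊢; omega)
        simp only [List.length_cons] at *
        have hd : (1 : ℕ) + levenshtein Levenshtein.defaultCost xs (y :: ys) =
            Levenshtein.defaultCost.delete x + levenshtein Levenshtein.defaultCost xs (y :: ys) := rfl
        rcases min_cases (Levenshtein.defaultCost.delete x + levenshtein Levenshtein.defaultCost xs (y :: ys)) (min (Levenshtein.defaultCost.insert y + levenshtein Levenshtein.defaultCost (x :: xs) ys) (Levenshtein.defaultCost.substitute x y + levenshtein Levenshtein.defaultCost xs ys)) with ⟨he, _⟩ | ⟨he, _⟩ <;> rw [he]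
        · show _ ≤ 1 + _ + _
          omega
        · rcases min_cases (Levenshtein.defaultCost.insert y + levenshtein Levenshtein.defaultCost (x :: xs) ys)
            (Levenshtein.defaultCost.substitute x y + levenshtein Levenshtein.defaultCost xs ys) with ⟨he2, _⟩ | ⟨he2, _⟩ <;> rw [he2]
          · show _ ≤ 1 + _ + _
            omega
          · have : levenshtein Levenshtein.defaultCost xs ys ≤
                Levenshtein.defaultCost.substitute x y + levenshtein Levenshtein.defaultCost xs ys :=
              Nat.le_add_left _ _
            omega

lemma lev_len_le (xs ys : List ℕ) :
    xs.length ≤ levenshtein Levenshtein.defaultCost xs ys + ys.length :=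
  lev_len_le_aux (xs.length + ys.length) xs ys le_rfl

lemma lev_cons_le (x : ℕ) (xs ys : List ℕ) :
    levenshtein Levenshtein.defaultCost (x :: xs) ys ≤
      1 + levenshtein Levenshtein.defaultCost xs ys := by
  cases ys with
  | nil => simp [lev_nil_right]
  | cons y ys =>
    rw [levenshtein_cons_cons]
    exact le_trans (min_le_left _ _) (le_of_eq rfl)

lemma lev_replicate_append_le (k x : ℕ) (xs ys : List ℕ) :
    levenshtein Levenshtein.defaultCost (List.replicate k x ++ xs) ys ≤
      k + levenshtein Levenshtein.defaultCost xs ys := by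
  induction k with
  | zero => simp
  | succ k ih =>
    rw [List.replicate_succ, List.cons_append]
    calc _ ≤ 1 + levenshtein Levenshtein.defaultCost (List.replicate k x ++ xs) ys :=
            lev_cons_le _ _ _
      _ ≤ 1 + (k + levenshtein Levenshtein.defaultCost xs ys) := by omega
      _ = _ := by omega

lemma lev_cancel (x : ℕ) (xs ys : List ℕ) :
    levenshtein Levenshtein.defaultCost (x :: xs) (x :: ys) ≤
      levenshtein Levenshtein.defaultCost xs ys := by
  rw [levenshtein_cons_cons]
  refine le_trans (le_trans (min_le_right _ _) (min_le_right _ _)) ?_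
  simp [Levenshtein.defaultCost]

lemma lev_cancel_replicate (k x : ℕ) (xs ys : List ℕ) :
    levenshtein Levenshtein.defaultCost (List.replicate k x ++ xs) (List.replicate k x ++ ys) ≤
      levenshtein Levenshtein.defaultCost xs ys := by
  induction k with
  | zero => simp
  | succ k ih =>
    rw [List.replicate_succ, List.cons_append, List.cons_append]
    exact le_trans (lev_cancel _ _ _) ih

/-- Edit distance between the separator `6^T 5^T` and the deficient separator
`6^{θ1} 5^{θ2}` (with `θ1, θ2 < T`) equals the total count deficiency. -/
theorem editDist_separator
    (T θ1 θ2 : ℕ) (h1 : θ1 < T) (h2 : θ2 < T) :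
    editDist (List.replicate T 6 ++ List.replicate T 5)
        (List.replicate θ1 6 ++ List.replicate θ2 5) =
      (T - θ1) + (T - θ2) := by
  have hub : editDist (List.replicate T 6 ++ List.replicate T 5)
      (List.replicate θ1 6 ++ List.replicate θ2 5) ≤ (T - θ1) + (T - θ2) := by
    unfold editDist
    have e1 : List.replicate T 6 ++ List.replicate T 5 =
        List.replicate θ1 6 ++ (List.replicate (T - θ1) 6 ++
          (List.replicate θ2 5 ++ List.replicate (T - θ2) 5)) := by
      rw [← List.append_assoc, ← List.replicate_add, ← List.replicate_add]
      congr 2 <;> omega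
    rw [e1]
    calc levenshtein Levenshtein.defaultCost _ (List.replicate θ1 6 ++ List.replicate θ2 5)
        ≤ levenshtein Levenshtein.defaultCost
            (List.replicate (T - θ1) 6 ++ (List.replicate θ2 5 ++ List.replicate (T - θ2) 5))
            (List.replicate θ2 5) := by
          have := lev_cancel_replicate θ1 6
            (List.replicate (T - θ1) 6 ++ (List.replicate θ2 5 ++ List.replicate (T - θ2) 5))
            (List.replicate θ2 5)
          exact this
      _ ≤ (T - θ1) + levenshtein Levenshtein.defaultCost
            (List.replicate θ2 5 ++ List.replicate (T - θ2) 5) (List.replicate θ2 5) :=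
          lev_replicate_append_le _ _ _ _
      _ ≤ (T - θ1) + levenshtein Levenshtein.defaultCost (List.replicate (T - θ2) 5) [] := by
          have := lev_cancel_replicate θ2 5 (List.replicate (T - θ2) 5) []
          simp only [List.append_nil] at this
          omega
      _ = (T - θ1) + (T - θ2) := by rw [lev_nil_right]; simp
  have hlb := lev_len_le (List.replicate T 6 ++ List.replicate T 5)
      (List.replicate θ1 6 ++ List.replicate θ2 5)
  simp only [List.length_append, List.length_replicate] at hlb
  unfold editDist at *
  omega
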